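/- Let V₁ and V₂ be finite-dimensional real vector spaces, g ⊆ gl(V₁ ⊕ V₂) a Lie subalgebra such that every element of g preserves both V₁ and V₂, and such that the restriction maps g → gl(V₁) and g → gl(V₂) are both injective. If R : (V₁⊕V₂) × (V₁⊕V₂) → g is an alternating bilinear map satisfying the first Bianchi identity R(x,y)z + R(y,z)x + R(z,x)y = 0 for all x,y,z, then R(x,y) = 0 whenever x,y ∈ V₁, and R(x,y) = 0 whenever x,y ∈ V₂. -/

import Mathlib

attribute [local instance] LieRing.ofAssociativeRing

theorem stmt_0 (V₁ V₂ : Type*) [AddCommGroup V₁] [Module ℝ V₁]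
    [AddCommGroup V₂] [Module ℝ V₂]
    [FiniteDimensional ℝ V₁] [FiniteDimensional ℝ V₂]
    (g : LieSubalgebra ℝ (Module.End ℝ (V₁ × V₂)))
    (hpres₁ : ∀ A ∈ g, ∀ x : V₁, (A (x, 0)).2 = 0)
    (hpres₂ : ∀ A ∈ g, ∀ y : V₂, (A (0, y)).1 = 0)
    (hfaith₁ : ∀ A ∈ g, (∀ x : V₁, A (x, 0) = 0) → A = 0)
    (hfaith₂ : ∀ A ∈ g, (∀ y : V₂, A (0, y) = 0) → A = 0)
    (R : (V₁ × V₂) →ₗ[ℝ] (V₁ × V₂) →ₗ[ℝ] Module.End ℝ (V₁ × V₂))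
    (hval : ∀ a b, R a b ∈ g)
    (halt : ∀ a b, R a b = - R b a)
    (hBianchi : ∀ a b c, R a b c + R b c a + R c a b = 0) :
    (∀ x y : V₁, R (x, 0) (y, 0) = 0) ∧ (∀ x y : V₂, R (0, x) (0, y) = 0) := by
  constructor
  · intro x y
    apply hfaith₂ _ (hval _ _)
    intro z
    have hB := hBianchi (x, 0) (y, 0) (0, z)
    have h1 : (R (x, 0) (y, 0) (0, z)).1 = 0 := hpres₂ _ (hval _ _) z
    have h2 : (R (y, 0) (0, z) (x, 0)).2 = 0 := hpres₁ _ (hval _ _) x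
    have h3 : (R (0, z) (x, 0) (y, 0)).2 = 0 := hpres₁ _ (hval _ _) y
    have h4 : (R (x, 0) (y, 0) (0, z)).2 = 0 := by
      have := congrArg Prod.snd hB
      simp only [Prod.snd_add, h2, h3, Prod.snd_zero] at this
      simpa using this
    ext <;> simp [h1, h4]
  · intro x y
    apply hfaith₁ _ (hval _ _)
    intro z
    have hB := hBianchi (0, x) (0, y) (z, 0)
    have h1 : (R (0, x) (0, y) (z, 0)).2 = 0 := hpres₁ _ (hval _ _) z
    have h2 : (R (0, y) (z, 0) (0, x)).1 = 0 := hpres₂ _ (hval _ _) x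
    have h3 : (R (z, 0) (0, x) (0, y)).1 = 0 := hpres₂ _ (hval _ _) y
    have h4 : (R (0, x) (0, y) (z, 0)).1 = 0 := by
      have := congrArg Prod.fst hB
      simp only [Prod.fst_add, h2, h3, Prod.fst_zero] at this
      simpa using this
    ext <;> simp [h1, h4]
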